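/- Let a, x ∈ ℝ with sin a, sin x, sin(x−a) all nonzero, let A = √(3 + 2(cos 2a + cos 2(x−a) + cos 2x)) ≠ 0, define G₁₂ = sin(2a), G₂₃ = sin(2(x−a)), G₃₁ = −sin(2x), F₁₂ = sin a/|sin a|³, F₂₃ = sin(x−a)/|sin(x−a)|³, F₃₁ = −sin x/|sin x|³, and assume (G₁₂−G₂₃, G₃₁−G₁₂) ≠ (0,0) and f = (G₁₂−G₂₃)(F₃₁−F₁₂) − (F₁₂−F₂₃)(G₃₁−G₁₂) = 0. Then there exist θ₁ ∈ ℝ and ω ∈ ℝ such that θ₁, θ₂ = θ₁+a, θ₃ = θ₁+x and ω satisfy the equations of motion (ω²/2)·sin(2θ_k) = Σ_{i≠k} sin(θ_k−θ_i)/|sin(θ_k−θ_i)|³ for k = 1,2,3. -/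
import Mathlib


open Real

lemma exists_angle' (c s : ℝ) (h : c^2 + s^2 = 1) : ∃ φ : ℝ, Real.cos φ = c ∧ Real.sin φ = s := by
  rcases le_or_gt 0 s with hs | hs
  · refine ⟨Real.arccos c, Real.cos_arccos (by nlinarith) (by nlinarith), ?_⟩
    rw [Real.sin_arccos, show 1 - c^2 = s^2 by linarith]
    exact Real.sqrt_sq hs
  · refine ⟨-Real.arccos c, ?_, ?_⟩
    · rw [Real.cos_neg]; exact Real.cos_arccos (by nlinarith) (by nlinarith)
    · rw [Real.sin_neg, Real.sin_arccos, show 1 - c^2 = s^2 by linarith,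
        Real.sqrt_sq_eq_abs, abs_of_neg hs]; ring

/-- If a shape (a,x) with A ≠ 0 satisfies the rigid-rotator condition f = 0 (and not both
G₁₂−G₂₃ and G₃₁−G₁₂ vanish), then there is a corresponding relative equilibrium: some θ₁
and ω for which the configuration θ₁, θ₁+a, θ₁+x satisfies the equations of motion. -/
theorem stmt_7 (a x : ℝ)
    (hsa : sin a ≠ 0) (hsx : sin x ≠ 0) (hsxa : sin (x - a) ≠ 0)
    (hA : Real.sqrt (3 + 2 * (cos (2 * a) + cos (2 * (x - a)) + cos (2 * x))) ≠ 0)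
    (hne : (sin (2 * a) - sin (2 * (x - a)), -sin (2 * x) - sin (2 * a)) ≠ (0, 0))
    (hf : (sin (2 * a) - sin (2 * (x - a))) * (-(sin x / |sin x| ^ 3) - sin a / |sin a| ^ 3)
      - (sin a / |sin a| ^ 3 - sin (x - a) / |sin (x - a)| ^ 3)
        * (-sin (2 * x) - sin (2 * a)) = 0) :
    ∃ θ₁ ω : ℝ,
      (ω ^ 2 / 2 * sin (2 * θ₁)
        = sin (θ₁ - (θ₁ + a)) / |sin (θ₁ - (θ₁ + a))| ^ 3
          + sin (θ₁ - (θ₁ + x)) / |sin (θ₁ - (θ₁ + x))| ^ 3) ∧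
      (ω ^ 2 / 2 * sin (2 * (θ₁ + a))
        = sin ((θ₁ + a) - θ₁) / |sin ((θ₁ + a) - θ₁)| ^ 3
          + sin ((θ₁ + a) - (θ₁ + x)) / |sin ((θ₁ + a) - (θ₁ + x))| ^ 3) ∧
      (ω ^ 2 / 2 * sin (2 * (θ₁ + x))
        = sin ((θ₁ + x) - θ₁) / |sin ((θ₁ + x) - θ₁)| ^ 3
          + sin ((θ₁ + x) - (θ₁ + a)) / |sin ((θ₁ + x) - (θ₁ + a))| ^ 3) := by
  -- there is μ with μ·(G₃₁−G₁₂) = F₃₁−F₁₂ and μ·(G₁₂−G₂₃) = F₁₂−F₂₃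
  obtain ⟨μ, h1, h2⟩ : ∃ μ : ℝ,
      μ * (-sin (2 * x) - sin (2 * a)) = -(sin x / |sin x| ^ 3) - sin a / |sin a| ^ 3 ∧
      μ * (sin (2 * a) - sin (2 * (x - a)))
        = sin a / |sin a| ^ 3 - sin (x - a) / |sin (x - a)| ^ 3 := by
    by_cases hQ0 : -sin (2 * x) - sin (2 * a) = 0
    · have hP0 : sin (2 * a) - sin (2 * (x - a)) ≠ 0 := by
        intro h; exact hne (by rw [h, hQ0])
      refine ⟨(sin a / |sin a| ^ 3 - sin (x - a) / |sin (x - a)| ^ 3)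
        / (sin (2 * a) - sin (2 * (x - a))), ?_, div_mul_cancel₀ _ hP0⟩
      have hU : -(sin x / |sin x| ^ 3) - sin a / |sin a| ^ 3 = 0 := by
        rw [hQ0] at hf
        rcases mul_eq_zero.1 (by linarith : (sin (2 * a) - sin (2 * (x - a)))
          * (-(sin x / |sin x| ^ 3) - sin a / |sin a| ^ 3) = 0) with h | h
        · exact absurd h hP0
        · exact h
      rw [hQ0, hU]; ring
    · refine ⟨(-(sin x / |sin x| ^ 3) - sin a / |sin a| ^ 3)
        / (-sin (2 * x) - sin (2 * a)), div_mul_cancel₀ _ hQ0, ?_⟩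
      have hUP : (-(sin x / |sin x| ^ 3) - sin a / |sin a| ^ 3)
            * (sin (2 * a) - sin (2 * (x - a)))
          = (sin a / |sin a| ^ 3 - sin (x - a) / |sin (x - a)| ^ 3)
            * (-sin (2 * x) - sin (2 * a)) := by linear_combination hf
      calc (-(sin x / |sin x| ^ 3) - sin a / |sin a| ^ 3) / (-sin (2 * x) - sin (2 * a))
            * (sin (2 * a) - sin (2 * (x - a)))
          = (-(sin x / |sin x| ^ 3) - sin a / |sin a| ^ 3)
            * (sin (2 * a) - sin (2 * (x - a))) / (-sin (2 * x) - sin (2 * a)) := by ring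
        _ = (sin a / |sin a| ^ 3 - sin (x - a) / |sin (x - a)| ^ 3)
            * (-sin (2 * x) - sin (2 * a)) / (-sin (2 * x) - sin (2 * a)) := by rw [hUP]
        _ = sin a / |sin a| ^ 3 - sin (x - a) / |sin (x - a)| ^ 3 :=
            mul_div_cancel_right₀ _ hQ0
  -- the sign of μ
  set s : ℝ := if 0 ≤ μ then 1 else -1 with hsdef
  have hs2 : s * s = 1 := by
    rcases le_or_gt 0 μ with h | h
    · simp [hsdef, h]
    · simp [hsdef, not_le.2 h]
  have habs : |μ| = s * μ := by
    rcases le_or_gt 0 μ with h | h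
    · simp [hsdef, h, abs_of_nonneg h]
    · simp [hsdef, not_le.2 h, abs_of_neg h]
  -- amplitude A
  set A : ℝ := Real.sqrt (3 + 2 * (cos (2 * a) + cos (2 * (x - a)) + cos (2 * x))) with hAdef
  have hcsub : cos (2 * (x - a)) = cos (2 * x) * cos (2 * a) + sin (2 * x) * sin (2 * a) := by
    rw [show 2 * (x - a) = 2 * x - 2 * a by ring, cos_sub]
  have hDBC : 3 + 2 * (cos (2 * a) + cos (2 * (x - a)) + cos (2 * x))
      = (1 + cos (2 * a) + cos (2 * x)) ^ 2 + (sin (2 * a) + sin (2 * x)) ^ 2 := by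
    rw [hcsub]
    have p1 := sin_sq_add_cos_sq (2 * a)
    have p2 := sin_sq_add_cos_sq (2 * x)
    linear_combination (-1 : ℝ) * p1 - p2
  have hDnn : 0 ≤ 3 + 2 * (cos (2 * a) + cos (2 * (x - a)) + cos (2 * x)) := by
    rw [hDBC]; positivity
  have hA2 : A ^ 2 = 3 + 2 * (cos (2 * a) + cos (2 * (x - a)) + cos (2 * x)) :=
    Real.sq_sqrt hDnn
  have hApos : 0 < A := lt_of_le_of_ne (Real.sqrt_nonneg _) (Ne.symm hA)
  have hA0 : A ≠ 0 := ne_of_gt hApos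
  -- the angle φ = 2θ₁ from the translation formula
  obtain ⟨φ, hcφ, hsφ⟩ : ∃ φ : ℝ,
      cos φ = s * (1 + cos (2 * a) + cos (2 * x)) / A ∧
      sin φ = -(s * (sin (2 * a) + sin (2 * x))) / A := by
    apply exists_angle'
    field_simp
    rw [hA2, hDBC]
    linear_combination ((1 + cos (2 * a) + cos (2 * x)) ^ 2
      + (sin (2 * a) + sin (2 * x)) ^ 2) * hs2
  have hsin2xa : sin (2 * (x - a)) = sin (2 * x) * cos (2 * a) - cos (2 * x) * sin (2 * a) := by
    rw [show 2 * (x - a) = 2 * x - 2 * a by ring, sin_sub]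
  refine ⟨φ / 2, Real.sqrt (2 * (|μ| * A)), ?_, ?_, ?_⟩
  all_goals
    have hω : (Real.sqrt (2 * (|μ| * A))) ^ 2 = 2 * (|μ| * A) :=
      Real.sq_sqrt (by positivity)
  · -- equation for θ₁
    rw [show φ / 2 - (φ / 2 + a) = -a by ring, show φ / 2 - (φ / 2 + x) = -x by ring,
      show 2 * (φ / 2) = φ by ring, sin_neg, sin_neg, abs_neg, abs_neg, hω, hsφ, habs]
    have key : 2 * (s * μ * A) / 2 * (-(s * (sin (2 * a) + sin (2 * x))) / A)
        = μ * (-sin (2 * x) - sin (2 * a)) := by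
      have e : 2 * (s * μ * A) / 2 * (-(s * (sin (2 * a) + sin (2 * x))) / A)
          = (s * s) * μ * (A / A) * (-(sin (2 * a) + sin (2 * x))) := by ring
      rw [e, hs2, div_self hA0]; ring
    rw [key, h1]; ring
  · -- equation for θ₂ = θ₁ + a
    rw [show φ / 2 + a - φ / 2 = a by ring, show φ / 2 + a - (φ / 2 + x) = -(x - a) by ring,
      show 2 * (φ / 2 + a) = φ + 2 * a by ring, sin_neg, abs_neg, sin_add, hω, hsφ, hcφ, habs]
    have key : 2 * (s * μ * A) / 2 * (-(s * (sin (2 * a) + sin (2 * x))) / A * cos (2 * a)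
          + s * (1 + cos (2 * a) + cos (2 * x)) / A * sin (2 * a))
        = μ * (sin (2 * a) - sin (2 * (x - a))) := by
      have e : 2 * (s * μ * A) / 2 * (-(s * (sin (2 * a) + sin (2 * x))) / A * cos (2 * a)
            + s * (1 + cos (2 * a) + cos (2 * x)) / A * sin (2 * a))
          = (s * s) * μ * (A / A) * (-(sin (2 * a) + sin (2 * x)) * cos (2 * a)
            + (1 + cos (2 * a) + cos (2 * x)) * sin (2 * a)) := by ring
      rw [e, hs2, div_self hA0, hsin2xa]; ring
    rw [key, h2]; ring
  · -- equation for θ₃ = θ₁ + x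
    have h3 : μ * (sin (2 * (x - a)) + sin (2 * x))
        = sin (x - a) / |sin (x - a)| ^ 3 - -(sin x / |sin x| ^ 3) := by
      linear_combination -h1 - h2
    rw [show φ / 2 + x - φ / 2 = x by ring, show φ / 2 + x - (φ / 2 + a) = x - a by ring,
      show 2 * (φ / 2 + x) = φ + 2 * x by ring, sin_add, hω, hsφ, hcφ, habs]
    have key : 2 * (s * μ * A) / 2 * (-(s * (sin (2 * a) + sin (2 * x))) / A * cos (2 * x)
          + s * (1 + cos (2 * a) + cos (2 * x)) / A * sin (2 * x))
        = μ * (sin (2 * (x - a)) + sin (2 * x)) := by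
      have e : 2 * (s * μ * A) / 2 * (-(s * (sin (2 * a) + sin (2 * x))) / A * cos (2 * x)
            + s * (1 + cos (2 * a) + cos (2 * x)) / A * sin (2 * x))
          = (s * s) * μ * (A / A) * (-(sin (2 * a) + sin (2 * x)) * cos (2 * x)
            + (1 + cos (2 * a) + cos (2 * x)) * sin (2 * x)) := by ring
      rw [e, hs2, div_self hA0, hsin2xa]; ring
    rw [key, h3]; ring
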